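/- Let h: [n] → [n] be a Hessenberg function, and under the isomorphism φ of A^h_s/⟨x_s⟩ with A^{h^{(s)}}_{r_s} (x_m ↦ y_m for m < s, x_s ↦ 0, x_m ↦ y_{m-1} for m > s), the images of the generators satisfy: φ(g_{h(m),m}(x)) = g_{h^{(s)}(m),m}(y) for 1 ≤ m ≤ r_s - 1; φ(g_{h(m),m}(x)) = f_{h^{(s)}(m),m}(y) for r_s ≤ m ≤ s-1; and φ(f_{h(m),m}(x)) = f_{h^{(s)}(m-1),m-1}(y) for s+1 ≤ m ≤ n. (These are equalities of polynomials in ℚ[y_1,...,y_{n-1}].) -/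
import Mathlib


open MvPolynomial

/-- The variable `x_m` (1-indexed) in `ℚ[x_1,…,x_n]`. -/
noncomputable def xv (n : ℕ) (m : ℕ) : MvPolynomial (Fin n) ℚ :=
  if h : m - 1 < n then X ⟨m - 1, h⟩ else 0

/-- `f_{i,j} = ∑_{k=1}^{j} (∏_{ℓ=j+1}^{i} (x_k - x_ℓ)) x_k`. -/
noncomputable def fpoly (n i j : ℕ) : MvPolynomial (Fin n) ℚ :=
  ∑ k ∈ Finset.Icc 1 j, (∏ l ∈ Finset.Icc (j+1) i, (xv n k - xv n l)) * xv n k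

/-- `g_{i,j} = ∑_{k=1}^{j} ∏_{ℓ=j+1}^{i} (x_k - x_ℓ)`. -/
noncomputable def gpoly (n i j : ℕ) : MvPolynomial (Fin n) ℚ :=
  ∑ k ∈ Finset.Icc 1 j, ∏ l ∈ Finset.Icc (j+1) i, (xv n k - xv n l)

/-- `h` is a Hessenberg function on `{1,…,n}`. -/
def IsHessenberg (n : ℕ) (h : ℕ → ℕ) : Prop :=
  (∀ i, 1 ≤ i → i ≤ n → i ≤ h i ∧ h i ≤ n) ∧
  (∀ i, 1 ≤ i → i < n → h i ≤ h (i + 1))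

/-- The substitution `x_m ↦ y_m` (`m < s`), `x_s ↦ 0`, `x_m ↦ y_{m-1}` (`m > s`). -/
noncomputable def phiMap (n s : ℕ) :
    MvPolynomial (Fin n) ℚ →ₐ[ℚ] MvPolynomial (Fin (n - 1)) ℚ :=
  MvPolynomial.aeval fun k : Fin n =>
    if k.val + 1 < s then xv (n - 1) (k.val + 1)
    else if k.val + 1 = s then 0
    else xv (n - 1) k.val

lemma phi_xv (n s m : ℕ) (h1 : 1 ≤ m) (h2 : m ≤ n) :
    phiMap n s (xv n m) =
      if m < s then xv (n-1) m else if m = s then 0 else xv (n-1) (m-1) := by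
  rw [show xv n m = X ⟨m-1, by omega⟩ from by rw [xv, dif_pos]]
  rw [phiMap, MvPolynomial.aeval_X]
  simp only [Fin.val_mk]
  rw [Nat.sub_add_cancel h1]

lemma prod_shift {M : Type*} [CommMonoid M] (a b : ℕ) (F : ℕ → M) :
    ∏ l ∈ Finset.Icc (a+1) (b+1), F l = ∏ l ∈ Finset.Icc a b, F (l+1) := by
  rw [← Finset.map_add_right_Icc a b 1, Finset.prod_map]
  rfl

lemma sum_shift {M : Type*} [AddCommMonoid M] (a b : ℕ) (F : ℕ → M) :
    ∑ l ∈ Finset.Icc (a+1) (b+1), F l = ∑ l ∈ Finset.Icc a b, F (l+1) := by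
  rw [← Finset.map_add_right_Icc a b 1, Finset.sum_map]
  rfl

/-- Images of the generators under `φ`, as equalities in `ℚ[y₁,…,y_{n-1}]`. -/
theorem phi_generators (n : ℕ) (hn : 2 ≤ n) (h : ℕ → ℕ)
    (hh : IsHessenberg n h) (s : ℕ) (hs1 : 1 ≤ s)
    (hsp : s ≤ sInf {m | 1 ≤ m ∧ m ≤ n ∧ h m = m})
    (r : ℕ) (hr : r = sInf {m | 1 ≤ m ∧ m ≤ n ∧ s ≤ h m})
    (hs : ℕ → ℕ)
    (hhs : ∀ m, hs m =
      if m ≤ r - 1 then h m else if m ≤ s - 1 then h m - 1 else h (m + 1) - 1) :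
    (∀ m, 1 ≤ m → m ≤ r - 1 →
        phiMap n s (gpoly n (h m) m) = gpoly (n - 1) (hs m) m) ∧
    (∀ m, r ≤ m → m ≤ s - 1 →
        phiMap n s (gpoly n (h m) m) = fpoly (n - 1) (hs m) m) ∧
    (∀ m, s + 1 ≤ m → m ≤ n →
        phiMap n s (fpoly n (h m) m) = fpoly (n - 1) (hs (m - 1)) (m - 1)) := by
  -- basic facts
  have hmono : ∀ a b, 1 ≤ a → a ≤ b → b ≤ n → h a ≤ h b := by
    intro a b h1 hab hbn
    induction b with
    | zero => omega
    | succ k ih =>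
      rcases Nat.lt_or_ge a (k+1) with hlt | hge
      · exact le_trans (ih (by omega) (by omega)) (hh.2 k (by omega) (by omega))
      · have : a = k + 1 := by omega
        subst this; exact le_rfl
  -- s ≤ n via p
  have hpmem : n ∈ {m | 1 ≤ m ∧ m ≤ n ∧ h m = m} := by
    refine ⟨by omega, le_rfl, ?_⟩
    have := hh.1 n (by omega) le_rfl; omega
  have hsn : s ≤ n := le_trans hsp (le_trans (Nat.sInf_le hpmem) le_rfl)
  have hlt_s : ∀ m, 1 ≤ m → m < s → m < h m := by
    intro m h1 h2
    have hnm : m ∉ {m | 1 ≤ m ∧ m ≤ n ∧ h m = m} := by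
      intro hmem
      exact absurd (Nat.sInf_le hmem) (by omega)
    have := hh.1 m h1 (by omega)
    have : h m ≠ m := fun he => hnm ⟨h1, by omega, he⟩
    have := hh.1 m h1 (by omega)
    omega
  have hsmem : s ∈ {m | 1 ≤ m ∧ m ≤ n ∧ s ≤ h m} :=
    ⟨hs1, hsn, (hh.1 s hs1 hsn).1⟩
  have hrs : r ≤ s := hr ▸ Nat.sInf_le hsmem
  have hrmem : r ∈ {m | 1 ≤ m ∧ m ≤ n ∧ s ≤ h m} := by
    rw [hr]; exact Nat.sInf_mem ⟨s, hsmem⟩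
  have hr1 : 1 ≤ r := hrmem.1
  have hlow : ∀ m, 1 ≤ m → m < r → h m < s := by
    intro m h1 h2
    by_contra hc
    have : m ∈ {m | 1 ≤ m ∧ m ≤ n ∧ s ≤ h m} := ⟨h1, by omega, by omega⟩
    exact absurd (hr ▸ Nat.sInf_le this) (by omega)
  have hhigh : ∀ m, r ≤ m → m ≤ n → s ≤ h m := fun m h1 h2 =>
    le_trans hrmem.2.2 (hmono r m hr1 h1 h2)
  refine ⟨?_, ?_, ?_⟩
  · -- claim 1
    intro m h1 h2
    have hm_lt : h m < s := hlow m h1 (by omega)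
    have hmn : m ≤ n := by omega
    rw [hhs m, if_pos h2]
    rw [gpoly, gpoly, map_sum]
    apply Finset.sum_congr rfl
    intro k hk
    rw [Finset.mem_Icc] at hk
    rw [map_prod]
    apply Finset.prod_congr rfl
    intro l hl
    rw [Finset.mem_Icc] at hl
    rw [map_sub, phi_xv n s k (by omega) (by omega),
        phi_xv n s l (by omega) (by omega),
        if_pos (by omega : k < s), if_pos (by omega : l < s)]
  · -- claim 2
    intro m hm1 hm2
    have h1m : 1 ≤ m := by omega
    have hms : m < s := by omega
    have hsh : s ≤ h m := hhigh m hm1 (by omega)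
    have hhn : h m ≤ n := (hh.1 m h1m (by omega)).2
    rw [hhs m, if_neg (by omega), if_pos (by omega)]
    rw [gpoly, fpoly, map_sum]
    apply Finset.sum_congr rfl
    intro k hk
    rw [Finset.mem_Icc] at hk
    rw [map_prod]
    have hksp : phiMap n s (xv n k) = xv (n-1) k := by
      rw [phi_xv n s k (by omega) (by omega), if_pos (by omega)]
    have hsplit : Finset.Icc (m+1) (h m) =
        (Finset.Icc (m+1) (s-1) ∪ {s}) ∪ Finset.Icc (s+1) (h m) := by
      ext x
      simp only [Finset.mem_Icc, Finset.mem_union, Finset.mem_singleton]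
      omega
    rw [hsplit, Finset.prod_union ?d1, Finset.prod_union ?d2, Finset.prod_singleton]
    case d1 =>
      rw [Finset.disjoint_left]
      intro x hx hx'
      simp only [Finset.mem_Icc, Finset.mem_union, Finset.mem_singleton] at hx hx'
      omega
    case d2 =>
      rw [Finset.disjoint_left]
      intro x hx hx'
      simp only [Finset.mem_Icc, Finset.mem_singleton] at hx hx'
      omega
    have e1 : ∏ l ∈ Finset.Icc (m+1) (s-1), phiMap n s (xv n k - xv n l)
        = ∏ l ∈ Finset.Icc (m+1) (s-1), (xv (n-1) k - xv (n-1) l) := by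
      apply Finset.prod_congr rfl
      intro l hl
      rw [Finset.mem_Icc] at hl
      rw [map_sub, hksp, phi_xv n s l (by omega) (by omega), if_pos (by omega)]
    have e2 : phiMap n s (xv n k - xv n s) = xv (n-1) k := by
      rw [map_sub, hksp, phi_xv n s s hs1 hsn,
          if_neg (by omega), if_pos rfl, sub_zero]
    have e3 : ∏ l ∈ Finset.Icc (s+1) (h m), phiMap n s (xv n k - xv n l)
        = ∏ l ∈ Finset.Icc s (h m - 1), (xv (n-1) k - xv (n-1) l) := by
      conv_lhs => rw [show h m = (h m - 1) + 1 by omega]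
      rw [prod_shift]
      apply Finset.prod_congr rfl
      intro l hl
      rw [Finset.mem_Icc] at hl
      rw [map_sub, hksp, phi_xv n s (l+1) (by omega) (by omega),
          if_neg (by omega), if_neg (by omega)]
      simp
    rw [e1, e2, e3]
    rw [show Finset.Icc (m+1) (h m - 1) =
        Finset.Icc (m+1) (s-1) ∪ Finset.Icc s (h m - 1) from by
      ext x; simp only [Finset.mem_Icc, Finset.mem_union]; omega,
      Finset.prod_union (by
        rw [Finset.disjoint_left]
        intro x hx hx'
        simp only [Finset.mem_Icc] at hx hx'
        omega)]
    ring
  · -- claim 3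
    intro m hm1 hm2
    have hsm : s < m := by omega
    have hmh : m ≤ h m := (hh.1 m (by omega) hm2).1
    have hhn : h m ≤ n := (hh.1 m (by omega) hm2).2
    rw [hhs (m-1), if_neg (by omega), if_neg (by omega),
        show m - 1 + 1 = m by omega]
    rw [fpoly, fpoly, map_sum]
    -- pointwise: evaluate the product (all l > s) and keep phi(x_k)
    have key : ∀ k ∈ Finset.Icc 1 m,
        phiMap n s ((∏ l ∈ Finset.Icc (m+1) (h m), (xv n k - xv n l)) * xv n k)
        = (∏ l ∈ Finset.Icc (m-1+1) (h m - 1), (phiMap n s (xv n k) - xv (n-1) l))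
            * phiMap n s (xv n k) := by
      intro k hk
      rw [Finset.mem_Icc] at hk
      rw [map_mul, map_prod]
      congr 1
      rw [show Finset.Icc (m+1) (h m) = Finset.Icc ((m-1+1)+1) ((h m - 1)+1) from by
        congr 1 <;> omega]
      rw [prod_shift]
      apply Finset.prod_congr rfl
      intro l hl
      rw [Finset.mem_Icc] at hl
      rw [map_sub, phi_xv n s (l+1) (by omega) (by omega),
          if_neg (by omega), if_neg (by omega)]
      simp
    rw [Finset.sum_congr rfl key]
    -- now split the sum over k at s
    have hsplit : Finset.Icc 1 m =
        (Finset.Icc 1 (s-1) ∪ {s}) ∪ Finset.Icc (s+1) m := by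
      ext x
      simp only [Finset.mem_Icc, Finset.mem_union, Finset.mem_singleton]
      omega
    rw [hsplit, Finset.sum_union ?e1, Finset.sum_union ?e2, Finset.sum_singleton]
    case e1 =>
      rw [Finset.disjoint_left]
      intro x hx hx'
      simp only [Finset.mem_Icc, Finset.mem_union, Finset.mem_singleton] at hx hx'
      omega
    case e2 =>
      rw [Finset.disjoint_left]
      intro x hx hx'
      simp only [Finset.mem_Icc, Finset.mem_singleton] at hx hx'
      omega
    have f2 : (∏ l ∈ Finset.Icc (m-1+1) (h m - 1),
        (phiMap n s (xv n s) - xv (n-1) l)) * phiMap n s (xv n s) = 0 := by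
      rw [phi_xv n s s (by omega) (by omega), if_neg (by omega), if_pos rfl, mul_zero]
    rw [f2, add_zero]
    have f1 : ∑ k ∈ Finset.Icc 1 (s-1),
        (∏ l ∈ Finset.Icc (m-1+1) (h m - 1), (phiMap n s (xv n k) - xv (n-1) l))
          * phiMap n s (xv n k)
        = ∑ k ∈ Finset.Icc 1 (s-1),
        (∏ l ∈ Finset.Icc (m-1+1) (h m - 1), (xv (n-1) k - xv (n-1) l))
          * xv (n-1) k := by
      apply Finset.sum_congr rfl
      intro k hk
      rw [Finset.mem_Icc] at hk
      rw [phi_xv n s k (by omega) (by omega), if_pos (by omega)]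
    have f3 : ∑ k ∈ Finset.Icc (s+1) m,
        (∏ l ∈ Finset.Icc (m-1+1) (h m - 1), (phiMap n s (xv n k) - xv (n-1) l))
          * phiMap n s (xv n k)
        = ∑ k ∈ Finset.Icc s (m-1),
        (∏ l ∈ Finset.Icc (m-1+1) (h m - 1), (xv (n-1) k - xv (n-1) l))
          * xv (n-1) k := by
      rw [show Finset.Icc (s+1) m = Finset.Icc (s+1) ((m-1)+1) from by congr 1; omega]
      rw [sum_shift]
      apply Finset.sum_congr rfl
      intro k hk
      rw [Finset.mem_Icc] at hk
      rw [phi_xv n s (k+1) (by omega) (by omega),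
          if_neg (by omega), if_neg (by omega)]
      simp
    rw [f1, f3]
    rw [show Finset.Icc 1 (m-1) =
        Finset.Icc 1 (s-1) ∪ Finset.Icc s (m-1) from by
      ext x; simp only [Finset.mem_Icc, Finset.mem_union]; omega,
      Finset.sum_union (by
        rw [Finset.disjoint_left]
        intro x hx hx'
        simp only [Finset.mem_Icc] at hx hx'
        omega)]
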